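/- Let f be a C^{1+γ} expanding map with repeller Λ, μ an f-invariant ergodic measure on Λ, f̂: M̂ → M̂ the inverse limit of f with projection π₀ and ergodic lift μ̂ supported on Λ̂. Given numbers ε > 0 and δ > 0, a set Λ_{K₁} ⊂ Λ̂ with μ̂(Λ_{K₁}) > 1 − δ, and a finite measurable partition 𝒫 of M each of whose elements P satisfies μ̂(Λ_{K₁} ∩ π₀⁻¹P) > 0, there exist a positive integer N₂ = N₂(ε,δ) and a compact subset Λ₂' ⊂ Λ_{K₁} with μ̂(Λ₂') > 1 − 2δ such that for every x̂ ∈ Λ₂' and every n ≥ N₂ there is an integer k ∈ [n, n+εn) with π₀ f̂^k(x̂) ∈ 𝒫(π₀(x̂)) and f̂^k(x̂) ∈ Λ_{K₁}. -/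

import Mathlib

open MeasureTheory Filter Topology Set

section Defs

variable {X : Type*} [MetricSpace X]

/-- `E` is an `(n, ε)`-separated set for the map `f`. -/
def IsSepSet (f : X → X) (n : ℕ) (ε : ℝ) (E : Finset X) : Prop :=
  ∀ x ∈ E, ∀ y ∈ E, x ≠ y → ∃ i < n, ε < dist (f^[i] x) (f^[i] y)

/-- Supremum of `∑_{x ∈ E} exp (ψ x)` over `(n,ε)`-separated subsets `E` of `Λ`. -/
noncomputable def sepSum (f : X → X) (Λ : Set X) (ψ : X → ℝ) (n : ℕ) (ε : ℝ) : ℝ :=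
  sSup {s : ℝ | ∃ E : Finset X, ↑E ⊆ Λ ∧ IsSepSet f n ε E ∧ s = ∑ x ∈ E, Real.exp (ψ x)}

/-- Sub-additive topological pressure of the sequence of potentials `Φ` for `f` on `Λ`,
defined via `(n,ε)`-separated sets; the limit as `ε → 0` is realized as the supremum
over `ε > 0` since the quantity is monotone in `ε`. -/
noncomputable def subPressure (f : X → X) (Λ : Set X) (Φ : ℕ → X → ℝ) : ℝ :=
  ⨆ ε : {ε : ℝ // 0 < ε},
    Filter.limsup (fun n : ℕ => Real.log (sepSum f Λ (Φ n) n ε.1) / n) Filter.atTop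

/-- Classical topological pressure of the single potential `φ` for `f` on `Λ`. -/
noncomputable def pressure (f : X → X) (Λ : Set X) (φ : X → ℝ) : ℝ :=
  subPressure f Λ (fun n x => ∑ i ∈ Finset.range n, φ (f^[i] x))

variable [MeasurableSpace X]

/-- Entropy of a finite partition. -/
noncomputable def partEnt (μ : Measure X) (P : Finset (Set X)) : ℝ :=
  ∑ A ∈ P, Real.negMulLog (μ A).toReal

/-- The dynamical refinement `P ∨ f⁻¹ P ∨ ⋯ ∨ f⁻⁽ⁿ⁻¹⁾ P`. -/
noncomputable def dynJoin (f : X → X) (P : Finset (Set X)) (n : ℕ) : Finset (Set X) := by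
  classical
  exact (Finset.univ : Finset (Fin n → {A // A ∈ P})).image
    fun a => ⋂ i : Fin n, f^[(i : ℕ)] ⁻¹' ((a i : Set X))

/-- `P` is a finite measurable partition mod `μ`. -/
def IsMeasPartitionMod (μ : Measure X) (P : Finset (Set X)) : Prop :=
  (∀ A ∈ P, MeasurableSet A) ∧ (⋃ A ∈ P, A) = Set.univ ∧
    ∀ A ∈ P, ∀ B ∈ P, A ≠ B → μ (A ∩ B) = 0

/-- Measure-theoretic (Kolmogorov–Sinai) entropy of `f` with respect to `μ`. -/
noncomputable def mEntropy (f : X → X) (μ : Measure X) : ℝ :=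
  sSup {h : ℝ | ∃ P : Finset (Set X), IsMeasPartitionMod μ P ∧
    h = ⨅ n : ℕ, partEnt μ (dynJoin f P (n + 1)) / (n + 1)}

/-- `F_*(Ψ,μ) = lim_n (1/n) ∫ ψ_n dμ`; for a super-additive sequence `Ψ` and an invariant
measure `μ` this limit exists and equals the supremum `sup_n (1/n) ∫ ψ_n dμ`. -/
noncomputable def Fstar (Ψ : ℕ → X → ℝ) (μ : Measure X) : ℝ :=
  ⨆ n : {n : ℕ // 0 < n}, (∫ x, Ψ n.1 x ∂μ) / n.1

/-- Super-additive topological pressure of the sequence `Ψ` for `f` on `Λ`, defined via the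
variational principle. -/
noncomputable def supPressureVar (f : X → X) (Λ : Set X) (Ψ : ℕ → X → ℝ) : ℝ :=
  sSup {p : ℝ | ∃ μ : Measure X, IsProbabilityMeasure μ ∧ μ.map f = μ ∧ μ Λ = 1 ∧
    p = mEntropy f μ + Fstar Ψ μ}

end Defs

section ManifoldDefs

variable {M : Type*} [NormedAddCommGroup M] [InnerProductSpace ℝ M] [FiniteDimensional ℝ M]

/-- The `i`-th largest singular value (for `i ≥ 1`) of a linear operator on a
finite-dimensional real inner product space, via the Courant–Fischer min-max principle. -/
noncomputable def singVal (L : M →L[ℝ] M) (i : ℕ) : ℝ :=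
  sSup {r : ℝ | ∃ V : Submodule ℝ M, Module.finrank ℝ V = i ∧ ∀ v ∈ V, r * ‖v‖ ≤ ‖L v‖}

/-- `ψ^s(L) = ∑_{i=1}^{[s]} log α_i(L) + (s − [s]) log α_{[s]+1}(L)`. -/
noncomputable def psiSing (L : M →L[ℝ] M) (s : ℝ) : ℝ :=
  (∑ i ∈ Finset.range ⌊s⌋₊, Real.log (singVal L (i + 1)))
    + (s - ⌊s⌋₊) * Real.log (singVal L (⌊s⌋₊ + 1))

/-- `φ^t(L) = ∑_{i=m₀−[t]+1}^{m₀} log α_i(L) + (t − [t]) log α_{m₀−[t]}(L)`. -/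
noncomputable def phiSing (m₀ : ℕ) (L : M →L[ℝ] M) (t : ℝ) : ℝ :=
  (∑ i ∈ Finset.Icc (m₀ - ⌊t⌋₊ + 1) m₀, Real.log (singVal L i))
    + (t - ⌊t⌋₊) * Real.log (singVal L (m₀ - ⌊t⌋₊))

/-- `Λ` is a repeller for the expanding map `f`, with isolating neighborhood `U` and
expansion constant `κ`. -/
structure IsExpandingRepeller (f : M → M) (Λ U : Set M) (κ : ℝ) : Prop where
  compact : IsCompact Λ
  invariant : f '' Λ = Λ
  openU : IsOpen U
  isolated : Λ = {x ∈ U | ∀ n : ℕ, f^[n] x ∈ U}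
  one_lt : 1 < κ
  expanding : ∀ x ∈ Λ, ∀ v : M, κ * ‖v‖ ≤ ‖fderiv ℝ f x v‖

/-- `f` is of class `C^{1+γ}`: it is `C¹` and its differential is `γ`-Hölder. -/
def IsC1Holder (f : M → M) (γ : ℝ) : Prop :=
  ContDiff ℝ 1 f ∧ ∃ K : ℝ, 0 ≤ K ∧ ∀ x y : M, ‖fderiv ℝ f x - fderiv ℝ f y‖ ≤ K * ‖x - y‖ ^ γ

/-- `f` restricted to `Λ` is topologically transitive. -/
def TopTransOn (f : M → M) (Λ : Set M) : Prop :=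
  ∀ V W : Set M, IsOpen V → IsOpen W → (V ∩ Λ).Nonempty → (W ∩ Λ).Nonempty →
    ∃ n : ℕ, (f^[n] '' (V ∩ Λ) ∩ W).Nonempty


end ManifoldDefs

section InvLim

variable {M : Type*} [NormedAddCommGroup M] [InnerProductSpace ℝ M] [FiniteDimensional ℝ M]

/-- The inverse limit (natural extension) `M̂` of `f : M → M`:
sequences `{x_n}_{n ∈ ℤ}` with `x_n = f(x_{n+1})`. -/
abbrev InvLimit (f : M → M) : Type _ := {x : ℤ → M // ∀ n : ℤ, x n = f (x (n + 1))}

/-- The lift `f̂` of `f` to the inverse limit `M̂`. -/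
def fhat (f : M → M) : InvLimit f → InvLimit f :=
  fun x => ⟨fun n => f (x.1 n), fun n => congrArg f (x.2 n)⟩

/-- `P` is a genuine finite measurable partition of `M`. -/
def IsFinPartition [MeasurableSpace M] (P : Finset (Set M)) : Prop :=
  (∀ A ∈ P, MeasurableSet A) ∧ (⋃ A ∈ P, A) = Set.univ ∧
    ∀ A ∈ P, ∀ B ∈ P, A ≠ B → A ∩ B = ∅

end InvLim

set_option linter.unusedSectionVars false
set_option maxHeartbeats 1000000

namespace Stmt15Aux

open MeasureTheory Filter Topology Set

variable {X : Type*} [MeasurableSpace X]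

/-- Running maximum `max (0, S₁h, …, S_N h)` of Birkhoff sums. -/
noncomputable def maxS (T : X → X) (h : X → ℝ) : ℕ → X → ℝ
  | 0 => fun _ => 0
  | (N + 1) => fun x => max (maxS T h N x) (birkhoffSum T h (N + 1) x)

variable {T : X → X} {h : X → ℝ} {ν : Measure X}

lemma maxS_nonneg (N : ℕ) (x : X) : 0 ≤ maxS T h N x := by
  induction N with
  | zero => simp [maxS]
  | succ N ih => exact le_trans ih (le_max_left _ _)

lemma birkhoffSum_le_maxS {n N : ℕ} (hn : n ≤ N) (x : X) :
    birkhoffSum T h n x ≤ maxS T h N x := by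
  induction N with
  | zero =>
    obtain rfl : n = 0 := Nat.le_zero.mp hn
    simp [maxS, birkhoffSum]
  | succ N ih =>
    rcases Nat.lt_or_ge n (N + 1) with hlt | hge
    · exact le_trans (ih (Nat.lt_succ_iff.mp hlt)) (le_max_left _ _)
    · obtain rfl : n = N + 1 := le_antisymm hn hge
      exact le_max_right _ _

lemma maxS_mono (N : ℕ) (x : X) : maxS T h N x ≤ maxS T h (N + 1) x :=
  le_max_left _ _

lemma measurable_birkhoffSum (hT : Measurable T) (hm : Measurable h) (n : ℕ) :
    Measurable (birkhoffSum T h n) := by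
  unfold birkhoffSum
  exact Finset.measurable_sum _ fun k _ => hm.comp (hT.iterate k)

lemma measurable_maxS (hT : Measurable T) (hm : Measurable h) (N : ℕ) :
    Measurable (maxS T h N) := by
  induction N with
  | zero => simpa [maxS] using measurable_const
  | succ N ih => exact ih.max (measurable_birkhoffSum hT hm (N + 1))

lemma integrable_birkhoffSum (hTP : MeasurePreserving T ν ν) (hm : Measurable h)
    (hint : Integrable h ν) (n : ℕ) : Integrable (birkhoffSum T h n) ν := by
  unfold birkhoffSum
  refine integrable_finset_sum _ fun k _ => ?_
  exact ((hTP.iterate k).integrable_comp hint.aestronglyMeasurable).mpr hint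

lemma integrable_maxS (hTP : MeasurePreserving T ν ν) (hm : Measurable h)
    (hint : Integrable h ν) (N : ℕ) : Integrable (maxS T h N) ν := by
  induction N with
  | zero => simpa [maxS] using integrable_const (0 : ℝ)
  | succ N ih =>
    have : Integrable (birkhoffSum T h (N + 1)) ν := integrable_birkhoffSum hTP hm hint (N + 1)
    exact ih.sup this

lemma maxS_le_max (N : ℕ) (x : X) :
    maxS T h N x ≤ max 0 (h x + maxS T h N (T x)) := by
  induction N with
  | zero => simp [maxS]
  | succ N ih =>
    refine max_le ?_ ?_
    · refine le_trans ih (max_le_max le_rfl ?_)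
      exact add_le_add le_rfl (maxS_mono N (T x))
    · rw [birkhoffSum_succ']
      refine le_trans ?_ (le_max_right _ _)
      exact add_le_add le_rfl (birkhoffSum_le_maxS (Nat.le_succ N) (T x))

lemma exists_birkhoffSum_pos_of_maxS_pos {N : ℕ} {x : X} (hx : 0 < maxS T h N x) :
    ∃ n, 0 < birkhoffSum T h n x := by
  induction N with
  | zero => simp [maxS] at hx
  | succ N ih =>
    simp only [maxS] at hx
    rcases lt_max_iff.mp hx with h1 | h1
    · exact ih h1
    · exact ⟨N + 1, h1⟩

/-- **Maximal ergodic theorem.** -/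
lemma maximal_ergodic (hTP : MeasurePreserving T ν ν) [IsProbabilityMeasure ν]
    (hm : Measurable h) (hint : Integrable h ν) (N : ℕ) :
    0 ≤ ∫ x in {x | 0 < maxS T h N x}, h x ∂ν := by
  set F : Set X := {x | 0 < maxS T h N x} with hF
  have hFmeas : MeasurableSet F :=
    measurableSet_lt measurable_const (measurable_maxS hTP.measurable hm N)
  set u : X → ℝ := fun x => maxS T h N x - maxS T h N (T x) with hu
  have hMmeas : Measurable (maxS T h N) := measurable_maxS hTP.measurable hm N
  have hMint : Integrable (maxS T h N) ν := integrable_maxS hTP hm hint N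
  have hMTint : Integrable (fun x => maxS T h N (T x)) ν :=
    (hTP.integrable_comp hMmeas.aestronglyMeasurable).mpr hMint
  have huint : Integrable u ν := hMint.sub hMTint
  have key2 : ∀ x ∈ F, u x ≤ h x := by
    intro x hx
    have hkey := maxS_le_max (T := T) (h := h) N x
    rcases le_or_gt (h x + maxS T h N (T x)) 0 with h1 | h1
    · have : maxS T h N x ≤ 0 := le_trans hkey (by simpa using h1)
      exact absurd hx (by simp [hF]; linarith)
    · have : maxS T h N x ≤ h x + maxS T h N (T x) := le_trans hkey (by simp [le_of_lt h1])
      simp only [hu]; linarith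
  have key3 : ∀ x ∈ Fᶜ, u x ≤ 0 := by
    intro x hx
    have h0 : maxS T h N x = 0 :=
      le_antisymm (not_lt.mp (by simpa [hF] using hx)) (maxS_nonneg N x)
    have := maxS_nonneg (T := T) (h := h) N (T x)
    simp only [hu, h0]; linarith
  have hint0 : ∫ x, u x ∂ν = 0 := by
    have h1 : ∫ x, maxS T h N (T x) ∂ν = ∫ x, maxS T h N x ∂ν := by
      conv_rhs => rw [← hTP.map_eq]
      rw [integral_map hTP.measurable.aemeasurable]
      rw [hTP.map_eq]
      exact hMmeas.aestronglyMeasurable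
    rw [hu]
    rw [integral_sub hMint hMTint, h1, sub_self]
  have hsplit : ∫ x in F, u x ∂ν + ∫ x in Fᶜ, u x ∂ν = 0 := by
    rw [integral_add_compl hFmeas huint, hint0]
  have hneg : ∫ x in Fᶜ, u x ∂ν ≤ 0 := setIntegral_nonpos hFmeas.compl key3
  have hFu : 0 ≤ ∫ x in F, u x ∂ν := by linarith
  calc (0:ℝ) ≤ ∫ x in F, u x ∂ν := hFu
    _ ≤ ∫ x in F, h x ∂ν :=
      setIntegral_mono_on huint.integrableOn hint.integrableOn hFmeas key2

/-- Limit form of the maximal ergodic theorem. -/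
lemma maximal_ergodic' (hTP : MeasurePreserving T ν ν) [IsProbabilityMeasure ν]
    (hm : Measurable h) (hint : Integrable h ν) :
    0 ≤ ∫ x in {x | ∃ n, 0 < birkhoffSum T h n x}, h x ∂ν := by
  set F : ℕ → Set X := fun N => {x | 0 < maxS T h N x} with hF
  have hFmeas : ∀ N, MeasurableSet (F N) := fun N =>
    measurableSet_lt measurable_const (measurable_maxS hTP.measurable hm N)
  set G : Set X := {x | ∃ n, 0 < birkhoffSum T h n x} with hG
  have hGmeas : MeasurableSet G := by
    have hGeq : G = ⋃ n, {x | 0 < birkhoffSum T h n x} := by ext x; simp [hG]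
    rw [hGeq]
    exact MeasurableSet.iUnion fun n =>
      measurableSet_lt measurable_const (measurable_birkhoffSum hTP.measurable hm n)
  have hFG : ∀ N, F N ⊆ G := fun N x hx => exists_birkhoffSum_pos_of_maxS_pos hx
  have hGF : ∀ x ∈ G, ∃ N, x ∈ F N := by
    rintro x ⟨n, hn⟩
    exact ⟨n, lt_of_lt_of_le hn (birkhoffSum_le_maxS le_rfl x)⟩
  have hFmono : Monotone F :=
    monotone_nat_of_le_succ fun N x hx => lt_of_lt_of_le hx (maxS_mono N x)
  have htendsto : Tendsto (fun N => ∫ x in F N, h x ∂ν) atTop (𝓝 (∫ x in G, h x ∂ν)) := by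
    have h1 : ∀ N, ∫ x in F N, h x ∂ν = ∫ x, (F N).indicator h x ∂ν := fun N =>
      (integral_indicator (hFmeas N)).symm
    have h2 : ∫ x in G, h x ∂ν = ∫ x, G.indicator h x ∂ν := (integral_indicator hGmeas).symm
    rw [h2]; simp_rw [h1]
    refine tendsto_integral_of_dominated_convergence (fun x => |h x|)
      (fun N => (hm.indicator (hFmeas N)).aestronglyMeasurable) hint.abs
      (fun N => ae_of_all _ fun x => by
        simpa [Real.norm_eq_abs] using norm_indicator_le_norm_self h x)
      (ae_of_all _ fun x => ?_)
    by_cases hxG : x ∈ G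
    · obtain ⟨N₀, hN₀⟩ := hGF x hxG
      apply tendsto_atTop_of_eventually_const (i₀ := N₀)
      intro N hN
      have hxFN : x ∈ F N := hFmono hN hN₀
      rw [Set.indicator_of_mem hxFN, Set.indicator_of_mem hxG]
    · have hxF : ∀ N, x ∉ F N := fun N hx => hxG (hFG N hx)
      apply tendsto_atTop_of_eventually_const (i₀ := 0)
      intro N _
      rw [Set.indicator_of_notMem (hxF N), Set.indicator_of_notMem hxG]
  exact ge_of_tendsto htendsto
    (Filter.Eventually.of_forall fun N => maximal_ergodic hTP hm hint N)

end Stmt15Aux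

namespace Stmt15Aux

open MeasureTheory Filter Topology Set

variable {X : Type*} [MeasurableSpace X] {T : X → X} {ν : Measure X}

lemma birkhoffSum_sub_const (T : X → X) (g : X → ℝ) (α : ℝ) (n : ℕ) (x : X) :
    birkhoffSum T (fun y => g y - α) n x = birkhoffSum T g n x - n * α := by
  unfold birkhoffSum
  rw [Finset.sum_sub_distrib, Finset.sum_const, Finset.card_range, nsmul_eq_mul]

/-- Key pointwise consequence of ergodicity and the maximal ergodic theorem:
for a bounded measurable `g` and any `β` exceeding the space average of `g`,
almost every Birkhoff sum is eventually below `β * n`. -/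
lemma eventually_birkhoffSum_le (hT : Ergodic T ν) [IsProbabilityMeasure ν]
    {g : X → ℝ} (hm : Measurable g) (hbd : ∀ x, |g x| ≤ 1) {β : ℝ}
    (hβ : ∫ x, g x ∂ν < β) :
    ∀ᵐ x ∂ν, ∀ᶠ n in atTop, birkhoffSum T g n x ≤ β * n := by
  have hintg : Integrable g ν := by
    refine (integrable_const (1:ℝ)).mono' hm.aestronglyMeasurable ?_
    filter_upwards with x
    simpa [Real.norm_eq_abs] using hbd x
  set α : ℝ := ((∫ x, g x ∂ν) + β) / 2 with hαdef
  have hα1 : ∫ x, g x ∂ν < α := by rw [hαdef]; linarith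
  have hα2 : α < β := by rw [hαdef]; linarith
  set h : X → ℝ := fun y => g y - α with hhdef
  have hmh : Measurable h := hm.sub measurable_const
  have hinth : Integrable h ν := hintg.sub (integrable_const α)
  set C : ℝ := 1 + |α| with hCdef
  have hC0 : 0 < C := by positivity
  have hbC : ∀ x, |h x| ≤ C := by
    intro x
    calc |h x| ≤ |g x| + |α| := abs_sub _ _
      _ ≤ 1 + |α| := by linarith [hbd x]
  set A : Set X :=
    {x | ∃ q : ℚ, 0 < q ∧ ∃ᶠ n in atTop, (q : ℝ) * n < birkhoffSum T h n x} with hAdef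
  have hAmeas : MeasurableSet A := by
    have : A = ⋃ q : ℚ, ⋃ _ : 0 < q, ⋂ N : ℕ, ⋃ n : ℕ, ⋃ _ : N ≤ n,
        {x | (q : ℝ) * n < birkhoffSum T h n x} := by
      ext x
      simp [hAdef, Filter.frequently_atTop]
    rw [this]
    refine MeasurableSet.iUnion fun q => MeasurableSet.iUnion fun _ =>
      MeasurableSet.iInter fun N => MeasurableSet.iUnion fun n => MeasurableSet.iUnion fun _ => ?_
    exact measurableSet_lt measurable_const (measurable_birkhoffSum hT.measurable hmh n)
  have hAinv : T ⁻¹' A = A := by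
    ext x
    simp only [mem_preimage, hAdef, mem_setOf_eq]
    constructor
    · rintro ⟨q, hq, hfreq⟩
      refine ⟨q / 2, by positivity, ?_⟩
      rw [Filter.frequently_atTop] at hfreq ⊢
      intro N
      obtain ⟨n, hn, hlt⟩ := hfreq (max N (⌈2 * C / q + 1⌉₊))
      have hnN : N ≤ n := le_trans (le_max_left _ _) hn
      have hnB : (2 * C / (q:ℝ) + 1) ≤ n := by
        have := Nat.ceil_le.mp (le_max_right N (⌈2 * C / (q:ℝ) + 1⌉₊) |>.trans hn)
        exact this
      refine ⟨n + 1, le_trans hnN (Nat.le_succ n), ?_⟩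
      have hS : birkhoffSum T h (n + 1) x = h x + birkhoffSum T h n (T x) :=
        birkhoffSum_succ' T h n x
      have hq' : (0:ℝ) < q := by exact_mod_cast hq
      have h1 : (q:ℝ) * n - C ≥ ((q:ℝ)/2) * (n + 1) := by
        have : ((q:ℝ)/2) * n ≥ C + (q:ℝ)/2 := by
          have h2 : ((q:ℝ)/2) * (2 * C / q + 1) = C + (q:ℝ)/2 := by
            field_simp
          nlinarith [hnB]
        nlinarith
      obtain ⟨habs1, habs2⟩ := abs_le.mp (hbC x)
      push_cast
      push_cast at hlt h1
      rw [hS]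
      clear_value α h C
      linarith
    · rintro ⟨q, hq, hfreq⟩
      refine ⟨q / 2, by positivity, ?_⟩
      rw [Filter.frequently_atTop] at hfreq ⊢
      intro N
      obtain ⟨n, hn, hlt⟩ := hfreq (max (N + 1) (⌈2 * C / q⌉₊))
      have hn1 : 1 ≤ n := le_trans (Nat.le_add_left 1 N) (le_trans (le_max_left _ _) hn)
      obtain ⟨m, rfl⟩ : ∃ m, n = m + 1 := ⟨n - 1, (Nat.succ_pred_eq_of_pos hn1).symm⟩
      have hmN : N ≤ m := by
        have := le_trans (le_max_left (N+1) _) hn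
        omega
      have hnB : (2 * C / (q:ℝ)) ≤ m + 1 := by
        have := Nat.ceil_le.mp (le_trans (le_max_right (N+1) (⌈2 * C / (q:ℝ)⌉₊)) hn)
        push_cast at this ⊢
        exact this
      refine ⟨m, hmN, ?_⟩
      have hS : birkhoffSum T h (m + 1) x = h x + birkhoffSum T h m (T x) :=
        birkhoffSum_succ' T h m x
      have hq' : (0:ℝ) < q := by exact_mod_cast hq
      obtain ⟨habs1, habs2⟩ := abs_le.mp (hbC x)
      have h1 : (q:ℝ) * (m + 1) - C ≥ ((q:ℝ)/2) * m := by
        have h2 : ((q:ℝ)/2) * (2 * C / q) = C := by field_simp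
        nlinarith [hnB]
      push_cast at hlt h1 ⊢
      rw [hS] at hlt
      clear_value α h C
      linarith
  have hA0 : ν A = 0 := by
    rcases hT.toPreErgodic.measure_self_or_compl_eq_zero hAmeas hAinv with h0 | h0
    · exact h0
    · exfalso
      set F : Set X := {x | ∃ n, 0 < birkhoffSum T h n x} with hFdef
      have hFmeas : MeasurableSet F := by
        have hFeq : F = ⋃ n, {x | 0 < birkhoffSum T h n x} := by ext x; simp [hFdef]
        rw [hFeq]
        exact MeasurableSet.iUnion fun n =>
          measurableSet_lt measurable_const (measurable_birkhoffSum hT.measurable hmh n)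
      have hAF : A ⊆ F := by
        rintro x ⟨q, hq, hfreq⟩
        obtain ⟨n, hn, hlt⟩ := Filter.frequently_atTop.mp hfreq 1
        have hq' : (0:ℝ) < q := by exact_mod_cast hq
        have : (0:ℝ) < (q:ℝ) * n := by
          have : (1:ℝ) ≤ n := by exact_mod_cast hn
          nlinarith
        exact ⟨n, lt_trans this hlt⟩
      have hFc : ν Fᶜ = 0 :=
        measure_mono_null (compl_subset_compl.mpr hAF) h0
      have hge : 0 ≤ ∫ x in F, h x ∂ν := maximal_ergodic' hT.toMeasurePreserving hmh hinth
      have hFeq : ∫ x in F, h x ∂ν = ∫ x, h x ∂ν := by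
        have := integral_add_compl hFmeas hinth (f := h)
        have hz : ∫ x in Fᶜ, h x ∂ν = 0 := by
          rw [Measure.restrict_eq_zero.mpr hFc, integral_zero_measure]
        linarith
      have hneg : ∫ x, h x ∂ν < 0 := by
        rw [hhdef]
        rw [integral_sub hintg (integrable_const α)]
        simp only [integral_const, measure_univ, ENNReal.toReal_one, one_smul, smul_eq_mul, probReal_univ, one_mul]
        linarith
      rw [hFeq] at hge
      linarith
  have hae : ∀ᵐ x ∂ν, x ∉ A := by
    rw [ae_iff]
    simpa using hA0
  filter_upwards [hae] with x hx
  obtain ⟨q0, hq01, hq02⟩ := exists_rat_btwn (show (0:ℝ) < β - α by linarith)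
  have hq0 : 0 < q0 := by exact_mod_cast hq01
  have hnot : ¬ ∃ᶠ n in atTop, (q0 : ℝ) * n < birkhoffSum T h n x := by
    intro hcon
    exact hx ⟨q0, hq0, hcon⟩
  rw [Filter.not_frequently] at hnot
  filter_upwards [hnot] with n hn
  rw [not_lt] at hn
  have hS : birkhoffSum T h n x = birkhoffSum T g n x - n * α :=
    birkhoffSum_sub_const T g α n x
  rw [hS] at hn
  have hn0 : (0:ℝ) ≤ n := Nat.cast_nonneg n
  nlinarith

/-- Two-sided Birkhoff bounds for indicator functions of positive-measure sets. -/
lemma birkhoff_bounds (hT : Ergodic T ν) [IsProbabilityMeasure ν] {B : Set X}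
    (hB : MeasurableSet B) {θ : ℝ} (hθ : 0 < θ) :
    ∀ᵐ x ∂ν, ∀ᶠ n in atTop,
      ((ν B).toReal - θ) * n ≤ birkhoffSum T (B.indicator 1) n x ∧
        birkhoffSum T (B.indicator 1) n x ≤ ((ν B).toReal + θ) * n := by
  set g : X → ℝ := B.indicator 1 with hgdef
  have hm : Measurable g := measurable_one.indicator hB
  have hbd : ∀ x, |g x| ≤ 1 := by
    intro x
    by_cases h : x ∈ B <;>
      simp [hgdef, Set.indicator_of_mem, Set.indicator_of_notMem, h]
  have hint : ∫ x, g x ∂ν = (ν B).toReal := integral_indicator_one hB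
  have hup := eventually_birkhoffSum_le hT hm hbd (β := (ν B).toReal + θ)
    (by rw [hint]; linarith)
  have hm' : Measurable (fun x => -(g x)) := hm.neg
  have hbd' : ∀ x, |(-(g x))| ≤ 1 := fun x => by rw [abs_neg]; exact hbd x
  have hint' : ∫ x, -(g x) ∂ν = -(ν B).toReal := by rw [integral_neg, hint]
  have hdown := eventually_birkhoffSum_le hT hm' hbd' (β := θ - (ν B).toReal)
    (by rw [hint']; linarith)
  filter_upwards [hup, hdown] with x h1 h2
  filter_upwards [h1, h2] with n hn1 hn2
  refine ⟨?_, hn1⟩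
  have hneg : birkhoffSum T (fun y => -(g y)) n x = -birkhoffSum T g n x := by
    unfold birkhoffSum
    rw [← Finset.sum_neg_distrib]
  rw [hneg] at hn2
  have hexp : (θ - (ν B).toReal) * n = -(((ν B).toReal - θ) * n) := by ring
  rw [hexp] at hn2
  linarith

end Stmt15Aux

/-- Let `f` be a `C^{1+γ}` expanding map with repeller `Λ`, `μ` an ergodic
invariant measure on `Λ`, `f̂ : M̂ → M̂` the inverse limit of `f` with projection `π₀` and
ergodic lift `μ̂` supported on `Λ̂`. Given `ε, δ > 0`, a set `Λ_{K₁} ⊆ Λ̂` with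
`μ̂(Λ_{K₁}) > 1 − δ`, and a finite measurable partition `𝒫` of `M` each of whose elements
`P` satisfies `μ̂(Λ_{K₁} ∩ π₀⁻¹ P) > 0`, there exist a positive integer `N₂` and a compact
subset `Λ₂' ⊆ Λ_{K₁}` with `μ̂(Λ₂') > 1 − 2δ` such that for every `x̂ ∈ Λ₂'` and `n ≥ N₂`
there is `k ∈ [n, n + εn)` with `π₀ f̂^k(x̂) ∈ 𝒫(π₀(x̂))` and `f̂^k(x̂) ∈ Λ_{K₁}`. -/
theorem stmt15 {M : Type*} [NormedAddCommGroup M] [InnerProductSpace ℝ M]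
    [FiniteDimensional ℝ M] [MeasurableSpace M] [BorelSpace M]
    (f : M → M) (γ : ℝ) (hγ : 0 < γ) (hf : IsC1Holder f γ)
    (Λ U : Set M) (κ : ℝ) (hrep : IsExpandingRepeller f Λ U κ)
    (μ : Measure M) (hμprob : IsProbabilityMeasure μ) (hμerg : Ergodic f μ) (hμΛ : μ Λ = 1)
    (μhat : Measure (InvLimit f)) (hhatprob : IsProbabilityMeasure μhat)
    (hhaterg : Ergodic (fhat f) μhat)
    (hproj : μhat.map (fun x : InvLimit f => x.1 0) = μ)
    (hhatsupp : μhat {x : InvLimit f | ∀ n : ℤ, x.1 n ∈ Λ} = 1)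
    (ε δ : ℝ) (hε : 0 < ε) (hδ : 0 < δ)
    (ΛK : Set (InvLimit f)) (hΛKmeas : MeasurableSet ΛK)
    (hΛKsub : ΛK ⊆ {x : InvLimit f | ∀ n : ℤ, x.1 n ∈ Λ})
    (hΛKbig : ENNReal.ofReal (1 - δ) < μhat ΛK)
    (P : Finset (Set M)) (hP : IsFinPartition (M := M) P)
    (hpos : ∀ A ∈ P, 0 < μhat (ΛK ∩ (fun x : InvLimit f => x.1 0) ⁻¹' A)) :
    ∃ N₂ : ℕ, 0 < N₂ ∧ ∃ Λ₂' : Set (InvLimit f), Λ₂' ⊆ ΛK ∧ IsCompact Λ₂' ∧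
      ENNReal.ofReal (1 - 2 * δ) < μhat Λ₂' ∧
      ∀ x ∈ Λ₂', ∀ n : ℕ, N₂ ≤ n → ∃ k : ℕ, n ≤ k ∧ (k : ℝ) < n + ε * n ∧
        (∃ A ∈ P, x.1 0 ∈ A ∧ ((fhat f)^[k] x).1 0 ∈ A) ∧ (fhat f)^[k] x ∈ ΛK := by
  classical
  have hfc : Continuous f := hf.1.continuous
  set T : InvLimit f → InvLimit f := fhat f with hTdef
  have hTmeas : Measurable T := by
    refine Measurable.subtype_mk ?_
    exact measurable_pi_lambda _ fun n =>
      hfc.measurable.comp ((measurable_pi_apply n).comp measurable_subtype_coe)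
  have hπ : Measurable (fun x : InvLimit f => x.1 0) :=
    (measurable_pi_apply 0).comp measurable_subtype_coe
  set B : Set M → Set (InvLimit f) :=
    (fun A => ΛK ∩ (fun x : InvLimit f => x.1 0) ⁻¹' A) with hBdef
  have hBmeas : ∀ A ∈ P, MeasurableSet (B A) := fun A hA =>
    hΛKmeas.inter (hπ (hP.1 A hA))
  set c : Set M → ℝ := (fun A => (μhat (B A)).toReal) with hcdef
  have hcpos : ∀ A ∈ P, 0 < c A := fun A hA =>
    ENNReal.toReal_pos (hpos A hA).ne' (measure_ne_top _ _)
  set θ : Set M → ℝ := (fun A => c A * ε / (4 * (2 + ε))) with hθdef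
  have hθpos : ∀ A ∈ P, 0 < θ A := by
    intro A hA
    have h1 := hcpos A hA
    have h2 : (0:ℝ) < 2 + ε := by linarith
    rw [hθdef]
    positivity
  have hθmul : ∀ A ∈ P, θ A * (2 + ε) = c A * ε / 4 := by
    intro A hA
    have h2 : (0:ℝ) < 2 + ε := by linarith
    rw [hθdef]
    field_simp
  set g : Set M → InvLimit f → ℝ := (fun A => (B A).indicator 1) with hgdef
  -- almost-everywhere two-sided Birkhoff bounds, simultaneously for all A ∈ P
  have hae : ∀ᵐ x ∂μhat, ∀ A ∈ P, ∀ᶠ n in Filter.atTop,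
      (c A - θ A) * n ≤ birkhoffSum T (g A) n x ∧
        birkhoffSum T (g A) n x ≤ (c A + θ A) * n := by
    rw [Filter.eventually_all_finset]
    intro A hA
    exact Stmt15Aux.birkhoff_bounds hhaterg (hBmeas A hA) (hθpos A hA)
  -- the monotone family of good sets
  set D : ℕ → Set (InvLimit f) := (fun N =>
    {x | ∀ A ∈ P, ∀ n, N ≤ n → (c A - θ A) * n ≤ birkhoffSum T (g A) n x ∧
      birkhoffSum T (g A) n x ≤ (c A + θ A) * n}) with hDdef
  have hDmeas : ∀ N, MeasurableSet (D N) := by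
    intro N
    have hrw : D N = ⋂ A ∈ P, ⋂ n : ℕ, ⋂ _ : N ≤ n,
        ({x | (c A - θ A) * n ≤ birkhoffSum T (g A) n x} ∩
          {x | birkhoffSum T (g A) n x ≤ (c A + θ A) * n}) := by
      ext x
      simp only [hDdef, Set.mem_setOf_eq, Set.mem_iInter, Set.mem_inter_iff]
    rw [hrw]
    refine Finset.measurableSet_biInter _ fun A hA => ?_
    refine MeasurableSet.iInter fun n => MeasurableSet.iInter fun _ => ?_
    have hSm : Measurable (birkhoffSum T (g A) n) :=
      Stmt15Aux.measurable_birkhoffSum hTmeas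
        (measurable_one.indicator (hBmeas A hA)) n
    exact (measurableSet_le measurable_const hSm).inter
      (measurableSet_le hSm measurable_const)
  have hDmono : Monotone D := by
    intro N N' hNN' x hx A hA n hn
    exact hx A hA n (le_trans hNN' hn)
  have hDfull : μhat (⋃ N, D N) = 1 := by
    have hmem : ∀ᵐ x ∂μhat, x ∈ ⋃ N, D N := by
      filter_upwards [hae] with x hx
      have hx' : ∀ᶠ n in Filter.atTop, ∀ A ∈ P,
          (c A - θ A) * n ≤ birkhoffSum T (g A) n x ∧
            birkhoffSum T (g A) n x ≤ (c A + θ A) * n :=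
        (Filter.eventually_all_finset P).mpr hx
      obtain ⟨N, hN⟩ := Filter.eventually_atTop.mp hx'
      exact Set.mem_iUnion.mpr ⟨N, fun A hA n hn => hN n hn A hA⟩
    have hcompl : μhat (⋃ N, D N)ᶜ = 0 := by
      have h0 := MeasureTheory.ae_iff.mp hmem
      have heq : (⋃ N, D N)ᶜ = {a | ¬ a ∈ ⋃ N, D N} := rfl
      rw [heq]; exact h0
    have := MeasureTheory.prob_compl_eq_zero_iff
      (μ := μhat) (MeasurableSet.iUnion hDmeas)
    exact this.mp hcompl
  -- quantitative choice of N₀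
  have htend : Filter.Tendsto (fun N => (μhat (D N)).toReal) Filter.atTop (nhds 1) := by
    have h0 := tendsto_measure_iUnion_atTop (μ := μhat) hDmono
    rw [hDfull] at h0
    have h1 := (ENNReal.tendsto_toReal (a := 1) (by simp)).comp h0
    exact h1
  set t : ℝ := (ENNReal.ofReal (1 - 2 * δ)).toReal with htdef
  set a : ℝ := (μhat ΛK).toReal with hadef
  have htlta : t < a := by
    have h1 : ENNReal.ofReal (1 - 2 * δ) < μhat ΛK :=
      lt_of_le_of_lt (ENNReal.ofReal_le_ofReal (by linarith)) hΛKbig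
    exact (ENNReal.toReal_lt_toReal ENNReal.ofReal_ne_top (measure_ne_top _ _)).mpr h1
  set gap : ℝ := (a - t) / 3 with hgapdef
  have hgap : 0 < gap := by rw [hgapdef]; linarith
  obtain ⟨N₀, hN₀⟩ : ∃ N₀, 1 - gap < (μhat (D N₀)).toReal := by
    have := htend.eventually (eventually_gt_nhds (show 1 - gap < 1 by linarith))
    exact this.exists
  -- the set E = ΛK ∩ D N₀ has large measure
  set E : Set (InvLimit f) := ΛK ∩ D N₀ with hEdef
  have hEmeas : MeasurableSet E := hΛKmeas.inter (hDmeas N₀)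
  have hDc : (μhat (D N₀)ᶜ).toReal = 1 - (μhat (D N₀)).toReal := by
    have hadd : μhat (D N₀) + μhat (D N₀)ᶜ = 1 := by
      rw [measure_add_measure_compl (hDmeas N₀), measure_univ]
    have := congrArg ENNReal.toReal hadd
    rw [ENNReal.toReal_add (measure_ne_top _ _) (measure_ne_top _ _)] at this
    simp only [ENNReal.toReal_one] at this
    linarith
  have hEbig : a - gap < (μhat E).toReal := by
    have hsub : ΛK ⊆ E ∪ (D N₀)ᶜ := by
      intro x hx
      by_cases hxD : x ∈ D N₀
      · exact Or.inl ⟨hx, hxD⟩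
      · exact Or.inr hxD
    have h1 : μhat ΛK ≤ μhat E + μhat (D N₀)ᶜ :=
      le_trans (measure_mono hsub) (measure_union_le _ _)
    have h2 : a ≤ (μhat E).toReal + (μhat (D N₀)ᶜ).toReal := by
      have h3 := ENNReal.toReal_mono
        (ENNReal.add_ne_top.mpr ⟨measure_ne_top _ _, measure_ne_top _ _⟩) h1
      rw [ENNReal.toReal_add (measure_ne_top _ _) (measure_ne_top _ _)] at h3
      exact h3
    have h4 : (μhat (D N₀)ᶜ).toReal < gap := by rw [hDc]; linarith
    linarith
  -- inner regularity: pass to a closed (hence compact) subset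
  haveI : TopologicalSpace.PseudoMetrizableSpace (InvLimit f) :=
    inferInstanceAs (TopologicalSpace.PseudoMetrizableSpace
      {x : ℤ → M | ∀ n : ℤ, x n = f (x (n + 1))})
  haveI : BorelSpace (InvLimit f) :=
    inferInstanceAs (BorelSpace {x : ℤ → M | ∀ n : ℤ, x n = f (x (n + 1))})
  obtain ⟨F, hFE, hFclosed, hFlt⟩ :=
    hEmeas.exists_isClosed_lt_add (μ := μhat) (measure_ne_top _ _)
      (ε := ENNReal.ofReal gap) (ENNReal.ofReal_pos.mpr hgap).ne'
  have hFbig : t + gap < (μhat F).toReal := by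
    have h1 : (μhat E).toReal < (μhat F).toReal + gap := by
      have h2 := (ENNReal.toReal_lt_toReal (measure_ne_top _ _)
        (ENNReal.add_ne_top.mpr ⟨measure_ne_top _ _, ENNReal.ofReal_ne_top⟩)).mpr hFlt
      rw [ENNReal.toReal_add (measure_ne_top _ _) ENNReal.ofReal_ne_top,
        ENNReal.toReal_ofReal hgap.le] at h2
      exact h2
    have : t + gap = a - 2 * gap := by rw [hgapdef]; ring
    linarith
  -- compactness of F
  have hΛhat : IsCompact {x : InvLimit f | ∀ n : ℤ, x.1 n ∈ Λ} := by
    rw [Topology.IsEmbedding.isCompact_iff Topology.IsEmbedding.subtypeVal]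
    have himg : Subtype.val '' {x : InvLimit f | ∀ n : ℤ, x.1 n ∈ Λ} =
        (Set.univ.pi fun _ : ℤ => Λ) ∩ {y : ℤ → M | ∀ n : ℤ, y n = f (y (n + 1))} := by
      ext y
      constructor
      · rintro ⟨x, hx, rfl⟩
        exact ⟨fun n _ => hx n, x.2⟩
      · rintro ⟨h1, h2⟩
        exact ⟨⟨y, h2⟩, fun n => h1 n (Set.mem_univ n), rfl⟩
    rw [himg]
    refine (isCompact_univ_pi fun _ => hrep.compact).of_isClosed_subset ?_
      Set.inter_subset_left
    refine IsClosed.inter (isClosed_set_pi fun _ _ => hrep.compact.isClosed) ?_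
    have : {y : ℤ → M | ∀ n : ℤ, y n = f (y (n + 1))} =
        ⋂ n : ℤ, {y : ℤ → M | y n = f (y (n + 1))} := by
      ext y; simp
    rw [this]
    exact isClosed_iInter fun n =>
      isClosed_eq (continuous_apply n) (hfc.comp (continuous_apply (n + 1)))
  have hFsub : F ⊆ {x : InvLimit f | ∀ n : ℤ, x.1 n ∈ Λ} :=
    fun x hx => hΛKsub (hFE hx).1
  have hFcomp : IsCompact F := hΛhat.of_isClosed_subset hFclosed hFsub
  -- choice of N₂
  set N₂ : ℕ := max N₀ (⌈(2:ℝ) / ε⌉₊ + 1) with hN₂def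
  refine ⟨N₂, lt_of_lt_of_le (Nat.succ_pos _) (le_max_right _ _), F,
    fun x hx => (hFE hx).1, hFcomp, ?_, ?_⟩
  · -- measure bound
    rw [← ENNReal.ofReal_toReal (a := ENNReal.ofReal (1 - 2 * δ)) ENNReal.ofReal_ne_top]
    rw [ENNReal.ofReal_lt_iff_lt_toReal ENNReal.toReal_nonneg (measure_ne_top _ _)]
    linarith
  · -- the window property
    intro x hx n hn
    have hxE := hFE hx
    have hxD : x ∈ D N₀ := hxE.2
    have hnN₀ : N₀ ≤ n := le_trans (le_max_left _ _) hn
    have hn1 : (1:ℝ) ≤ n := by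
      have : 1 ≤ n := le_trans (le_trans (Nat.succ_le_succ (Nat.zero_le _))
        (le_max_right N₀ _)) hn
      exact_mod_cast this
    have hεn : (2:ℝ) < ε * n := by
      have h1 : (⌈(2:ℝ) / ε⌉₊ + 1 : ℕ) ≤ n := le_trans (le_max_right _ _) hn
      have h2 : ((⌈(2:ℝ) / ε⌉₊ : ℝ) + 1) ≤ n := by exact_mod_cast h1
      have h3 : (2:ℝ) / ε ≤ ⌈(2:ℝ) / ε⌉₊ := Nat.le_ceil _
      have h4 : (2:ℝ) / ε < n := by linarith
      calc (2:ℝ) = ε * (2 / ε) := by field_simp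
        _ < ε * n := by exact mul_lt_mul_of_pos_left h4 hε
    obtain ⟨A, hA, hxA⟩ : ∃ A ∈ P, x.1 0 ∈ A := by
      have h1 : x.1 0 ∈ ⋃ A ∈ P, A := by rw [hP.2.1]; trivial
      simpa using h1
    set w : ℕ := ⌈ε * n / 2⌉₊ with hwdef
    set m : ℕ := n + w with hmdef
    have hwlow : ε * n / 2 ≤ (w : ℝ) := Nat.le_ceil _
    have hwhigh : (w : ℝ) < ε * n := by
      have h1 : (w : ℝ) < ε * n / 2 + 1 := Nat.ceil_lt_add_one (by positivity)
      linarith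
    have hnm : n ≤ m := Nat.le_add_right n w
    have hb1 := (hxD A hA n hnN₀).2
    have hb2 := (hxD A hA m (le_trans hnN₀ hnm)).1
    have hmr : (m : ℝ) = (n : ℝ) + (w : ℝ) := by rw [hmdef]; push_cast; ring
    have hcA := hcpos A hA
    have hθA := hθpos A hA
    have hdiff : 0 < birkhoffSum T (g A) m x - birkhoffSum T (g A) n x := by
      have l0 : (c A - θ A) * ((n:ℝ) + w) ≤ birkhoffSum T (g A) m x := by
        rw [← hmr]; exact hb2
      have l1 : c A * (ε * (n:ℝ) / 2) ≤ c A * w :=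
        mul_le_mul_of_nonneg_left hwlow hcA.le
      have l2 : θ A * (2 * (n:ℝ) + w) ≤ θ A * (2 * n + ε * n) :=
        mul_le_mul_of_nonneg_left (by linarith) hθA.le
      have l3 : θ A * (2 * (n:ℝ) + ε * n) = (c A * ε / 4) * n := by
        have h5 : (2 * (n:ℝ) + ε * n) = (2 + ε) * n := by ring
        rw [h5, ← mul_assoc, hθmul A hA]
      have l4 : 0 < c A * ε * (n:ℝ) / 4 := by
        have hn0 : (0:ℝ) < n := by linarith
        have := mul_pos (mul_pos hcA hε) hn0
        linarith
      nlinarith [l0, l1, l2, l3, l4, hb1]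
    obtain ⟨k, hk, hkB⟩ : ∃ k ∈ Finset.Ico n m, T^[k] x ∈ B A := by
      by_contra hcon
      push_neg at hcon
      have hzero : ∀ k ∈ Finset.Ico n m, g A (T^[k] x) = 0 := fun k hk =>
        Set.indicator_of_notMem (hcon k hk) _
      have hsum : birkhoffSum T (g A) m x - birkhoffSum T (g A) n x
          = ∑ k ∈ Finset.Ico n m, g A (T^[k] x) := by
        rw [Finset.sum_Ico_eq_sub _ hnm]
        rfl
      rw [Finset.sum_eq_zero hzero] at hsum
      linarith
    obtain ⟨hkn, hkm⟩ := Finset.mem_Ico.mp hk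
    refine ⟨k, hkn, ?_, ⟨A, hA, hxA, hkB.2⟩, hkB.1⟩
    have h1 : (k : ℝ) < m := by exact_mod_cast hkm
    rw [hmr] at h1
    linarith
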